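/- Let V : [0,∞) → ℝ_{≥0} be a differentiable function satisfying V'(t) ≤ -a·V(t)^p - b·V(t)^q for all t with V(t) > 0, where a, b > 0, 0 < p < 1 < q. Then V(t) = 0 for all t ≥ T_max, where T_max = 1/(a(1-p)) + 1/(b(q-1)), regardless of the initial value V(0). -/

import Mathlib

open Set

/-- Phase 2 helper: while `V > 0`, `V^(1-p)` decreases at rate at least `a(1-p)`. -/
lemma phase2_aux {a b p q : ℝ} (ha : 0 < a) (hb : 0 < b)
    (hp0 : 0 < p) (hp1 : p < 1) (hq : 1 < q) (V V' : ℝ → ℝ)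
    (hderiv : ∀ t, 0 ≤ t → HasDerivAt V (V' t) t)
    (hineq : ∀ t, 0 ≤ t → 0 < V t → V' t ≤ -a * V t ^ p - b * V t ^ q)
    {s t : ℝ} (hs : 0 ≤ s) (hst : s ≤ t) (hpos : ∀ u ∈ Icc s t, 0 < V u) :
    V t ^ (1 - p) + a * (1 - p) * t ≤ V s ^ (1 - p) + a * (1 - p) * s := by
  set g : ℝ → ℝ := fun u => V u ^ (1 - p) + a * (1 - p) * u with hg
  set g' : ℝ → ℝ := fun u => V' u * (1 - p) * V u ^ (-p) + a * (1 - p) with hg'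
  have key : AntitoneOn g (Icc s t) := by
    apply antitoneOn_of_hasDerivWithinAt_nonpos (f' := g') (convex_Icc s t)
    · intro u hu
      have hu0 : 0 ≤ u := hs.trans hu.1
      have hVu : 0 < V u := hpos u hu
      have hd : HasDerivAt g (g' u) u := by
        have h1 : HasDerivAt (fun y => V y ^ (1 - p)) (V' u * (1 - p) * V u ^ (1 - p - 1)) u :=
          (hderiv u hu0).rpow_const (Or.inl (ne_of_gt hVu))
        have h2 : (1 : ℝ) - p - 1 = -p := by ring
        rw [h2] at h1
        simpa [hg, hg', Pi.add_def] using h1.add ((hasDerivAt_id u).const_mul (a * (1 - p)))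
      exact hd.continuousAt.continuousWithinAt
    · intro u hu
      rw [interior_Icc] at hu
      have hu0 : 0 ≤ u := hs.trans (le_of_lt hu.1)
      have hVu : 0 < V u := hpos u ⟨le_of_lt hu.1, le_of_lt hu.2⟩
      have h1 : HasDerivAt (fun y => V y ^ (1 - p)) (V' u * (1 - p) * V u ^ (1 - p - 1)) u :=
        (hderiv u hu0).rpow_const (Or.inl (ne_of_gt hVu))
      have h2 : (1 : ℝ) - p - 1 = -p := by ring
      rw [h2] at h1
      exact ((h1.add ((hasDerivAt_id u).const_mul (a * (1 - p)))).congr_deriv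
        (by simp [hg'])).hasDerivWithinAt
    · intro u hu
      rw [interior_Icc] at hu
      have hu0 : 0 ≤ u := hs.trans (le_of_lt hu.1)
      have hVu : 0 < V u := hpos u ⟨le_of_lt hu.1, le_of_lt hu.2⟩
      have hV' : V' u ≤ -a * V u ^ p - b * V u ^ q := hineq u hu0 hVu
      have hnp : (0:ℝ) < V u ^ (-p) := Real.rpow_pos_of_pos hVu _
      have e1 : V u ^ p * V u ^ (-p) = 1 := by
        rw [← Real.rpow_add hVu]; simp
      have e2 : V u ^ q * V u ^ (-p) = V u ^ (q - p) := by
        rw [← Real.rpow_add hVu]; ring_nf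
      have hqp : (0:ℝ) ≤ V u ^ (q - p) := (Real.rpow_pos_of_pos hVu _).le
      have h1p : (0:ℝ) < 1 - p := by linarith
      have step : V' u * (1 - p) * V u ^ (-p) ≤
          (-a * V u ^ p - b * V u ^ q) * (1 - p) * V u ^ (-p) := by
        have := mul_le_mul_of_nonneg_right
          (mul_le_mul_of_nonneg_right hV' h1p.le) hnp.le
        linarith
      have expand : (-a * V u ^ p - b * V u ^ q) * (1 - p) * V u ^ (-p)
          = -a * (1 - p) - b * (1 - p) * V u ^ (q - p) := by
        have : (-a * V u ^ p - b * V u ^ q) * (1 - p) * V u ^ (-p)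
            = -a * (1 - p) * (V u ^ p * V u ^ (-p))
              - b * (1 - p) * (V u ^ q * V u ^ (-p)) := by ring
        rw [this, e1, e2]; ring
      have hb1 : 0 ≤ b * (1 - p) * V u ^ (q - p) :=
        mul_nonneg (mul_nonneg hb.le h1p.le) hqp
      show g' u ≤ 0
      simp only [hg']
      nlinarith
  have := key (left_mem_Icc.mpr hst) (right_mem_Icc.mpr hst) hst
  simpa [hg] using this

/-- Phase 1 helper: while `V ≥ 1`, `V^(1-q)` increases at rate at least `b(q-1)`. -/
lemma phase1_aux {a b p q : ℝ} (ha : 0 < a) (hb : 0 < b)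
    (hp0 : 0 < p) (hp1 : p < 1) (hq : 1 < q) (V V' : ℝ → ℝ)
    (hderiv : ∀ t, 0 ≤ t → HasDerivAt V (V' t) t)
    (hineq : ∀ t, 0 ≤ t → 0 < V t → V' t ≤ -a * V t ^ p - b * V t ^ q)
    {s t : ℝ} (hs : 0 ≤ s) (hst : s ≤ t) (hpos : ∀ u ∈ Icc s t, 1 ≤ V u) :
    V s ^ (1 - q) - b * (q - 1) * s ≤ V t ^ (1 - q) - b * (q - 1) * t := by
  set g : ℝ → ℝ := fun u => V u ^ (1 - q) - b * (q - 1) * u with hg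
  set g' : ℝ → ℝ := fun u => V' u * (1 - q) * V u ^ (-q) - b * (q - 1) with hg'
  have key : MonotoneOn g (Icc s t) := by
    apply monotoneOn_of_hasDerivWithinAt_nonneg (f' := g') (convex_Icc s t)
    · intro u hu
      have hu0 : 0 ≤ u := hs.trans hu.1
      have hVu : 0 < V u := lt_of_lt_of_le one_pos (hpos u hu)
      have h1 : HasDerivAt (fun y => V y ^ (1 - q)) (V' u * (1 - q) * V u ^ (1 - q - 1)) u :=
        (hderiv u hu0).rpow_const (Or.inl (ne_of_gt hVu))
      have h2 : (1 : ℝ) - q - 1 = -q - 1 + 1 := by ring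
      have hd : HasDerivAt g (g' u) u := by
        have h2' : (1 : ℝ) - q - 1 = -q := by ring
        rw [h2'] at h1
        simpa [hg, hg', sub_eq_add_neg, Pi.add_def, Pi.neg_def] using
          h1.add (((hasDerivAt_id u).const_mul (b * (q - 1))).neg)
      exact hd.continuousAt.continuousWithinAt
    · intro u hu
      rw [interior_Icc] at hu
      have hu' : u ∈ Icc s t := ⟨le_of_lt hu.1, le_of_lt hu.2⟩
      have hu0 : 0 ≤ u := hs.trans hu'.1
      have hVu : 0 < V u := lt_of_lt_of_le one_pos (hpos u hu')
      have h1 : HasDerivAt (fun y => V y ^ (1 - q)) (V' u * (1 - q) * V u ^ (1 - q - 1)) u :=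
        (hderiv u hu0).rpow_const (Or.inl (ne_of_gt hVu))
      have h2' : (1 : ℝ) - q - 1 = -q := by ring
      rw [h2'] at h1
      have hd : HasDerivAt g (g' u) u := by
        simpa [hg, hg', sub_eq_add_neg, Pi.add_def, Pi.neg_def] using
          h1.add (((hasDerivAt_id u).const_mul (b * (q - 1))).neg)
      exact hd.hasDerivWithinAt
    · intro u hu
      rw [interior_Icc] at hu
      have hu' : u ∈ Icc s t := ⟨le_of_lt hu.1, le_of_lt hu.2⟩
      have hu0 : 0 ≤ u := hs.trans hu'.1
      have hVu : 0 < V u := lt_of_lt_of_le one_pos (hpos u hu')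
      have hV' : V' u ≤ -a * V u ^ p - b * V u ^ q := hineq u hu0 hVu
      have hnq : (0:ℝ) < V u ^ (-q) := Real.rpow_pos_of_pos hVu _
      have e1 : V u ^ q * V u ^ (-q) = 1 := by
        rw [← Real.rpow_add hVu]; simp
      have e2 : V u ^ p * V u ^ (-q) = V u ^ (p - q) := by
        rw [← Real.rpow_add hVu]; ring_nf
      have hpq : (0:ℝ) ≤ V u ^ (p - q) := (Real.rpow_pos_of_pos hVu _).le
      have hq1 : (0:ℝ) < q - 1 := by linarith
      -- V' u * (1-q) ≥ (-a V^p - b V^q) * (1-q), since 1-q<0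
      have step : (-a * V u ^ p - b * V u ^ q) * (1 - q) * V u ^ (-q) ≤
          V' u * (1 - q) * V u ^ (-q) := by
        have h1q : (1:ℝ) - q ≤ 0 := by linarith
        have := mul_le_mul_of_nonneg_right
          (mul_le_mul_of_nonpos_right hV' h1q) hnq.le
        linarith
      have expand : (-a * V u ^ p - b * V u ^ q) * (1 - q) * V u ^ (-q)
          = a * (q - 1) * V u ^ (p - q) + b * (q - 1) := by
        have : (-a * V u ^ p - b * V u ^ q) * (1 - q) * V u ^ (-q)
            = a * (q - 1) * (V u ^ p * V u ^ (-q))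
              + b * (q - 1) * (V u ^ q * V u ^ (-q)) := by ring
        rw [this, e1, e2]; ring
      have hb1 : 0 ≤ a * (q - 1) * V u ^ (p - q) :=
        mul_nonneg (mul_nonneg ha.le hq1.le) hpq
      show 0 ≤ g' u
      simp only [hg']
      nlinarith
  have := key (left_mem_Icc.mpr hst) (right_mem_Icc.mpr hst) hst
  simpa [hg] using this

/-- Fixed-time stability (Polyakov, Lemma 2): if the nonnegative, nonincreasing,
differentiable function `V` satisfies `V' t ≤ -a * V t ^ p - b * V t ^ q` whenever
`V t > 0`, with `a, b > 0`, `0 < p < 1 < q`, then `V t = 0` for all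
`t ≥ 1/(a(1-p)) + 1/(b(q-1))`, regardless of `V 0`. -/
theorem fixed_time_convergence {a b p q : ℝ} (ha : 0 < a) (hb : 0 < b)
    (hp0 : 0 < p) (hp1 : p < 1) (hq : 1 < q) (V V' : ℝ → ℝ)
    (hderiv : ∀ t, 0 ≤ t → HasDerivAt V (V' t) t)
    (hnonneg : ∀ t, 0 ≤ t → 0 ≤ V t)
    (hmono : ∀ s t, 0 ≤ s → s ≤ t → V t ≤ V s)
    (hineq : ∀ t, 0 ≤ t → 0 < V t → V' t ≤ -a * V t ^ p - b * V t ^ q) :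
    ∀ t, 1 / (a * (1 - p)) + 1 / (b * (q - 1)) ≤ t → V t = 0 := by
  have h1p : (0:ℝ) < 1 - p := by linarith
  have hq1 : (0:ℝ) < q - 1 := by linarith
  have ha1p : (0:ℝ) < a * (1 - p) := mul_pos ha h1p
  have hbq1 : (0:ℝ) < b * (q - 1) := mul_pos hb hq1
  set T1 : ℝ := 1 / (b * (q - 1)) with hT1
  set T2 : ℝ := 1 / (a * (1 - p)) with hT2
  have hT1pos : 0 < T1 := by positivity
  have hT2pos : 0 < T2 := by positivity
  set T : ℝ := T2 + T1 with hT
  have hT1T : T1 ≤ T := by linarith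
  -- Step 1: V T1 ≤ 1
  have step1 : V T1 ≤ 1 := by
    by_contra h
    push_neg at h
    have hpos : ∀ u ∈ Icc 0 T1, 1 ≤ V u := fun u hu =>
      le_of_lt (lt_of_lt_of_le h (hmono u T1 hu.1 hu.2))
    have := phase1_aux ha hb hp0 hp1 hq V V' hderiv hineq le_rfl hT1pos.le hpos
    -- V 0 ^ (1-q) - 0 ≤ V T1 ^ (1-q) - b(q-1)T1 ; b(q-1)T1 = 1
    have hbT1 : b * (q - 1) * T1 = 1 := by
      rw [hT1]; field_simp
    have hV0 : 0 < V 0 := lt_of_lt_of_le one_pos (hpos 0 ⟨le_rfl, hT1pos.le⟩)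
    have hV0p : 0 < V 0 ^ (1 - q) := Real.rpow_pos_of_pos hV0 _
    have hVT1 : V T1 ^ (1 - q) < 1 :=
      Real.rpow_lt_one_of_one_lt_of_neg h (by linarith)
    rw [hbT1] at this
    simp at this
    linarith
  -- Step 2: V T = 0
  have step2 : V T = 0 := by
    by_contra h
    have hVT : 0 < V T := lt_of_le_of_ne (hnonneg T (by positivity)) (Ne.symm h)
    have hpos : ∀ u ∈ Icc T1 T, 0 < V u := fun u hu =>
      lt_of_lt_of_le hVT (hmono u T (hT1pos.le.trans hu.1) hu.2)
    have := phase2_aux ha hb hp0 hp1 hq V V' hderiv hineq hT1pos.le hT1T hpos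
    have haT : a * (1 - p) * T - a * (1 - p) * T1 = 1 := by
      rw [hT, hT2]; field_simp; ring
    have hVT1p : V T1 ^ (1 - p) ≤ 1 :=
      Real.rpow_le_one (hnonneg T1 hT1pos.le) step1 h1p.le
    have hVTp : 0 < V T ^ (1 - p) := Real.rpow_pos_of_pos hVT _
    linarith
  -- Step 3: conclude
  intro t ht
  have hTt : T ≤ t := by rw [hT, hT2, hT1]; linarith
  have h0T : (0:ℝ) ≤ T := by positivity
  exact le_antisymm (step2 ▸ hmono T t h0T hTt) (hnonneg t (h0T.trans hTt))
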